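/- Equal slopes case: Let n be an odd prime, r₁,s₁,r₂,s₂ nonzero in ZMod n with r₁s₂ = r₂s₁, and let k = r₁⁻¹r₂ = s₁⁻¹s₂. Then the eigenvalues of M = ½(M(r₁,s₁) + M(r₂,s₂)) are λ_d = ½(cos(2πd/n) + cos(2π(−k(k−1)r₁s₁/2 + kd)/n)) for d = 0,…,n−1. -/

import Mathlib

open Matrix

/-- `ω n = e^{2πi/n}`. -/
noncomputable def omg (n : ℕ) : ℂ := Complex.exp (2 * Real.pi * Complex.I / n)

/-- The cyclic shift matrix: `S_{i,j} = 1` iff `i + 1 = j` in `ZMod n`. -/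
noncomputable def Smat (n : ℕ) : Matrix (ZMod n) (ZMod n) ℂ :=
  Matrix.of fun i j => if i + 1 = j then 1 else 0

/-- The diagonal matrix `R` with `R_{j,j} = ω^j`. -/
noncomputable def Rmat (n : ℕ) : Matrix (ZMod n) (ZMod n) ℂ :=
  Matrix.diagonal fun j => omg n ^ (j.val)

/-- The twisted circulant `A(r,s) = R^r S^s`. -/
noncomputable def Amat (n : ℕ) [NeZero n] (r s : ZMod n) : Matrix (ZMod n) (ZMod n) ℂ :=
  Rmat n ^ r.val * Smat n ^ s.val

/-- The Hermitian matrix `M(r,s) = ½(A(r,s) + A(r,s)*)`. -/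
noncomputable def Mmat (n : ℕ) [NeZero n] (r s : ZMod n) : Matrix (ZMod n) (ZMod n) ℂ :=
  (1 / 2 : ℂ) • (Amat n r s + (Amat n r s)ᴴ)

/-- The ℓ²-operator norm of a matrix. -/
noncomputable def opNorm {n : ℕ} [NeZero n] (M : Matrix (ZMod n) (ZMod n) ℂ) : ℝ :=
  ‖Matrix.toEuclideanCLM (𝕜 := ℂ) M‖


noncomputable def wfn (n : ℕ) [NeZero n] (a : ZMod n) : ℂ := omg n ^ a.val

section basic
variable (n : ℕ) [NeZero n]

lemma omg_pow_n : omg n ^ n = 1 := by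
  rw [omg, ← Complex.exp_nat_mul]
  have hn : (n : ℂ) ≠ 0 := Nat.cast_ne_zero.mpr (NeZero.ne n)
  have : (n:ℂ) * (2 * Real.pi * Complex.I / n) = 2 * Real.pi * Complex.I := by
    field_simp
  rw [this, Complex.exp_two_pi_mul_I]

lemma omg_pow_mod (m : ℕ) : omg n ^ m = omg n ^ (m % n) := by
  conv_lhs => rw [← Nat.div_add_mod m n]
  rw [pow_add, pow_mul, omg_pow_n, one_pow, one_mul]

lemma wfn_add (a b : ZMod n) : wfn n (a + b) = wfn n a * wfn n b := by
  rw [wfn, wfn, wfn, ZMod.val_add, ← omg_pow_mod, pow_add]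

lemma wfn_zero : wfn n 0 = 1 := by simp [wfn]

lemma wfn_exp (a : ZMod n) :
    wfn n a = Complex.exp (((2 * Real.pi * a.val / n : ℝ) : ℂ) * Complex.I) := by
  rw [wfn, omg, ← Complex.exp_nat_mul]
  congr 1
  have hn : (n : ℂ) ≠ 0 := Nat.cast_ne_zero.mpr (NeZero.ne n)
  push_cast
  ring

lemma wfn_mul_self_neg (a : ZMod n) : wfn n a * wfn n (-a) = 1 := by
  rw [← wfn_add, add_neg_cancel, wfn_zero]

lemma wfn_neg (a : ZMod n) : wfn n (-a) = (wfn n a)⁻¹ :=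
  (inv_eq_of_mul_eq_one_right (wfn_mul_self_neg n a)).symm

lemma wfn_abs (a : ZMod n) : ‖wfn n a‖ = 1 := by
  rw [wfn_exp]; exact Complex.norm_exp_ofReal_mul_I _

lemma star_wfn (a : ZMod n) : star (wfn n a) = wfn n (-a) := by
  rw [wfn_neg, Complex.inv_eq_conj (wfn_abs n a)]; rfl

lemma wfn_add_neg (a : ZMod n) :
    wfn n a + wfn n (-a) = ((2 * Real.cos (2 * Real.pi * a.val / n) : ℝ) : ℂ) := by
  rw [wfn_neg, wfn_exp, ← Complex.exp_neg]
  rw [show -(((2 * Real.pi * a.val / n : ℝ) : ℂ) * Complex.I)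
      = (-((2 * Real.pi * a.val / n : ℝ) : ℂ)) * Complex.I by ring]
  rw [← Complex.two_cos]
  push_cast [Complex.ofReal_cos]
  ring

end basic

section sums
variable (n : ℕ) [NeZero n]

lemma sum_wfn (hn : 1 < n) : ∑ d : ZMod n, wfn n d = 0 := by
  have hprim : IsPrimitiveRoot (omg n) n := Complex.isPrimitiveRoot_exp n (NeZero.ne n)
  have : ∑ d : ZMod n, wfn n d = ∑ j ∈ Finset.range n, omg n ^ j := by
    refine Finset.sum_nbij' (fun d => d.val) (fun m => (m : ZMod n)) ?_ ?_ ?_ ?_ ?_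
    · intro a _; exact Finset.mem_range.mpr (ZMod.val_lt a)
    · intro b _; exact Finset.mem_univ _
    · intro a _; exact ZMod.natCast_rightInverse a
    · intro b hb; exact ZMod.val_cast_of_lt (Finset.mem_range.mp hb)
    · intro a _; rfl
  rw [this, hprim.geom_sum_eq_zero hn]

lemma sum_wfn_mul [Fact n.Prime] (hn : 1 < n) {t : ZMod n} (ht : t ≠ 0) :
    ∑ d : ZMod n, wfn n (t * d) = 0 := by
  rw [Fintype.sum_equiv (Equiv.mulLeft₀ t ht) (fun d => wfn n (t * d)) (wfn n) (fun d => rfl)]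
  exact sum_wfn n hn

end sums

section matrices
variable (n : ℕ) [NeZero n]

lemma Smat_pow (m : ℕ) :
    (Smat n) ^ m = Matrix.of fun i j => if i + (m : ZMod n) = j then (1 : ℂ) else 0 := by
  induction m with
  | zero => ext i j; simp [Matrix.one_apply]
  | succ m ih =>
      rw [pow_succ, ih]
      ext i j
      rw [Matrix.mul_apply]
      simp only [Matrix.of_apply, Smat, ite_mul, one_mul, zero_mul]
      rw [Finset.sum_ite_eq]
      push_cast
      simp [add_assoc]

lemma Rmat_pow (m : ℕ) :
    (Rmat n) ^ m = Matrix.diagonal fun j : ZMod n => omg n ^ (j.val * m) := by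
  rw [Rmat, Matrix.diagonal_pow]
  ext i j
  simp [Matrix.diagonal_apply, pow_mul]

lemma Amat_eq (r s : ZMod n) :
    Amat n r s = Matrix.of fun i j => if i + s = j then wfn n (r * i) else 0 := by
  rw [Amat, Rmat_pow, Smat_pow]
  ext i j
  rw [Matrix.diagonal_mul]
  simp only [Matrix.of_apply, ZMod.natCast_val, ZMod.cast_id]
  rw [mul_ite, mul_one, mul_zero]
  congr 1
  rw [wfn, ZMod.val_mul, ← omg_pow_mod, mul_comm]

lemma AmatH_eq (r s : ZMod n) :
    (Amat n r s)ᴴ = Matrix.of fun i j => if i + (-s) = j then wfn n (r * s - r * i) else 0 := by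
  rw [Amat_eq]
  ext i j
  rw [Matrix.conjTranspose_apply, Matrix.of_apply, Matrix.of_apply]
  by_cases hij : i + -s = j
  · rw [if_pos hij, if_pos (by rw [← hij]; ring)]
    rw [star_wfn]
    congr 1
    rw [← hij]; ring
  · rw [if_neg hij, if_neg (fun hc => hij (by rw [← hc]; ring)), star_zero]

lemma shift_mul (t : ZMod n) (g : ZMod n → ℂ) (B : Matrix (ZMod n) (ZMod n) ℂ) :
    (Matrix.of fun i j => if i + t = j then g i else 0) * B
      = Matrix.of fun i d => g i * B (i + t) d := by
  ext i d
  rw [Matrix.mul_apply, Matrix.of_apply]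
  simp only [Matrix.of_apply, ite_mul, zero_mul]
  rw [Finset.sum_ite_eq]
  simp

end matrices
noncomputable def emz (n : ℕ) (r₁ s₁ m : ZMod n) : ZMod n :=
  r₁ * s₁ * (2 : ZMod n)⁻¹ * m * (m - 1)

noncomputable def Pm (n : ℕ) [NeZero n] (r₁ s₁ : ZMod n) : Matrix (ZMod n) (ZMod n) ℂ :=
  Matrix.of fun j d => wfn n (s₁⁻¹ * j * d - emz n r₁ s₁ (s₁⁻¹ * j))

noncomputable def lamv (n : ℕ) [NeZero n] (r₁ s₁ k : ZMod n) (d : ZMod n) : ℂ :=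
  (1/4 : ℂ) * (wfn n d + wfn n (-d)
    + wfn n (-(k * (k - 1) * (2 : ZMod n)⁻¹ * r₁ * s₁) + k * d)
    + wfn n (k * (k - 1) * (2 : ZMod n)⁻¹ * r₁ * s₁ - k * d))

lemma Pm_mul_conjTranspose (n : ℕ) [NeZero n] [Fact n.Prime] (r₁ s₁ : ZMod n)
    (hs₁ : s₁ ≠ 0) :
    Pm n r₁ s₁ * (Pm n r₁ s₁)ᴴ = (n : ℂ) • 1 := by
  have hn1 : 1 < n := (Fact.out : n.Prime).one_lt
  ext j j'
  rw [Matrix.mul_apply]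
  by_cases hjj : j = j'
  · subst hjj
    have h1 : ∀ d, Pm n r₁ s₁ j d * (Pm n r₁ s₁)ᴴ d j = 1 := fun d => by
      rw [Matrix.conjTranspose_apply, Pm, Matrix.of_apply, star_wfn,
        wfn_mul_self_neg]
    rw [Finset.sum_congr rfl (fun d _ => h1 d)]
    simp [Finset.card_univ]
  · have ht : s₁⁻¹ * (j - j') ≠ 0 :=
      mul_ne_zero (inv_ne_zero hs₁) (sub_ne_zero.mpr hjj)
    have h1 : ∀ d, Pm n r₁ s₁ j d * (Pm n r₁ s₁)ᴴ d j'
        = wfn n (emz n r₁ s₁ (s₁⁻¹ * j') - emz n r₁ s₁ (s₁⁻¹ * j))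
          * wfn n ((s₁⁻¹ * (j - j')) * d) := fun d => by
      simp only [Matrix.conjTranspose_apply, Pm, Matrix.of_apply]
      rw [star_wfn, ← wfn_add, ← wfn_add]
      congr 1
      ring
    rw [Finset.sum_congr rfl (fun d _ => h1 d), ← Finset.mul_sum,
      sum_wfn_mul n hn1 ht, mul_zero]
    simp [Matrix.one_apply, hjj]
lemma key_mul (n : ℕ) [NeZero n] [Fact n.Prime] (r₁ s₁ k : ZMod n)
    (hr₁ : r₁ ≠ 0) (hs₁ : s₁ ≠ 0) (h2 : (2 : ZMod n) ≠ 0) :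
    ((1/4 : ℂ) • (Amat n r₁ s₁ + (Amat n r₁ s₁)ᴴ
        + (Amat n (k * r₁) (k * s₁) + (Amat n (k * r₁) (k * s₁))ᴴ))) * Pm n r₁ s₁
      = Pm n r₁ s₁ * Matrix.diagonal (lamv n r₁ s₁ k) := by
  rw [AmatH_eq, AmatH_eq, Amat_eq, Amat_eq]
  rw [Matrix.smul_mul, Matrix.add_mul, Matrix.add_mul, Matrix.add_mul,
    shift_mul, shift_mul, shift_mul, shift_mul]
  ext j d
  rw [Matrix.mul_diagonal]
  simp only [Matrix.smul_apply, Matrix.add_apply, Matrix.of_apply, smul_eq_mul,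
    Pm, lamv, emz]
  have h4 : (4 : ZMod n) ≠ 0 := by
    have h42 : (4 : ZMod n) = 2 * 2 := by norm_num
    rw [h42]; exact mul_ne_zero h2 h2
  have T1 : wfn n (r₁ * j) *
        wfn n (s₁⁻¹ * (j + s₁) * d
          - r₁ * s₁ * (2 : ZMod n)⁻¹ * (s₁⁻¹ * (j + s₁)) * (s₁⁻¹ * (j + s₁) - 1))
      = wfn n d *
        wfn n (s₁⁻¹ * j * d - r₁ * s₁ * (2 : ZMod n)⁻¹ * (s₁⁻¹ * j) * (s₁⁻¹ * j - 1)) := by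
    rw [← wfn_add, ← wfn_add]; congr 1; field_simp; ring
  have T2 : wfn n (r₁ * s₁ - r₁ * j) *
        wfn n (s₁⁻¹ * (j + -s₁) * d
          - r₁ * s₁ * (2 : ZMod n)⁻¹ * (s₁⁻¹ * (j + -s₁)) * (s₁⁻¹ * (j + -s₁) - 1))
      = wfn n (-d) *
        wfn n (s₁⁻¹ * j * d - r₁ * s₁ * (2 : ZMod n)⁻¹ * (s₁⁻¹ * j) * (s₁⁻¹ * j - 1)) := by
    rw [← wfn_add, ← wfn_add]; congr 1; field_simp; ring
  have T3 : wfn n (k * r₁ * j) *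
        wfn n (s₁⁻¹ * (j + k * s₁) * d
          - r₁ * s₁ * (2 : ZMod n)⁻¹ * (s₁⁻¹ * (j + k * s₁)) * (s₁⁻¹ * (j + k * s₁) - 1))
      = wfn n (-(k * (k - 1) * (2 : ZMod n)⁻¹ * r₁ * s₁) + k * d) *
        wfn n (s₁⁻¹ * j * d - r₁ * s₁ * (2 : ZMod n)⁻¹ * (s₁⁻¹ * j) * (s₁⁻¹ * j - 1)) := by
    rw [← wfn_add, ← wfn_add]; congr 1
    have hι : s₁ * s₁⁻¹ = 1 := mul_inv_cancel₀ hs₁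
    have hβ : (2 : ZMod n) * (2 : ZMod n)⁻¹ = 1 := mul_inv_cancel₀ h2
    linear_combination (k * d - 2 * k * r₁ * j * (2 : ZMod n)⁻¹ * (s₁ * s₁⁻¹ + 1)
      - (2 : ZMod n)⁻¹ * k ^ 2 * r₁ * s₁ * (s₁ * s₁⁻¹ + 1)
      + (2 : ZMod n)⁻¹ * k * r₁ * s₁) * hι + (-(k * r₁ * j)) * hβ
  have T4 : wfn n (k * r₁ * (k * s₁) - k * r₁ * j) *
        wfn n (s₁⁻¹ * (j + -(k * s₁)) * d
          - r₁ * s₁ * (2 : ZMod n)⁻¹ * (s₁⁻¹ * (j + -(k * s₁))) * (s₁⁻¹ * (j + -(k * s₁)) - 1))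
      = wfn n (k * (k - 1) * (2 : ZMod n)⁻¹ * r₁ * s₁ - k * d) *
        wfn n (s₁⁻¹ * j * d - r₁ * s₁ * (2 : ZMod n)⁻¹ * (s₁⁻¹ * j) * (s₁⁻¹ * j - 1)) := by
    rw [← wfn_add, ← wfn_add]; congr 1
    have hι : s₁ * s₁⁻¹ = 1 := mul_inv_cancel₀ hs₁
    have hβ : (2 : ZMod n) * (2 : ZMod n)⁻¹ = 1 := mul_inv_cancel₀ h2
    linear_combination (-(k * d) + 2 * k * r₁ * j * (2 : ZMod n)⁻¹ * (s₁ * s₁⁻¹ + 1)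
      - (2 : ZMod n)⁻¹ * k ^ 2 * r₁ * s₁ * (s₁ * s₁⁻¹ + 1)
      - (2 : ZMod n)⁻¹ * k * r₁ * s₁) * hι + (k * r₁ * j - k ^ 2 * r₁ * s₁) * hβ
  linear_combination (1/4 : ℂ) * T1 + (1/4 : ℂ) * T2 + (1/4 : ℂ) * T3 + (1/4 : ℂ) * T4
theorem stmt17 (n : ℕ) [NeZero n] [Fact (Nat.Prime n)] (hodd : Odd n)
    (r₁ s₁ r₂ s₂ : ZMod n) (hr₁ : r₁ ≠ 0) (hs₁ : s₁ ≠ 0) (hr₂ : r₂ ≠ 0)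
    (hs₂ : s₂ ≠ 0) (h : r₁ * s₂ = r₂ * s₁)
    (k : ZMod n) (hk : k = r₁⁻¹ * r₂) :
    spectrum ℂ ((1 / 2 : ℂ) • (Mmat n r₁ s₁ + Mmat n r₂ s₂)) =
      Set.range (fun d : ZMod n =>
        ((1 / 2 * (Real.cos (2 * Real.pi * d.val / n) +
          Real.cos (2 * Real.pi *
            ((-(k * (k - 1) * (2 : ZMod n)⁻¹ * r₁ * s₁) + k * d).val) / n)) : ℝ) : ℂ)) := by
  have hp : Nat.Prime n := Fact.out
  have hnC : (n : ℂ) ≠ 0 := Nat.cast_ne_zero.mpr (NeZero.ne n)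
  have h2 : (2 : ZMod n) ≠ 0 := by
    intro hc
    have hdvd : n ∣ 2 := by
      have := (ZMod.natCast_eq_zero_iff 2 n).mp (by exact_mod_cast hc)
      exact this
    have hn2 : n = 2 := (Nat.prime_dvd_prime_iff_eq hp Nat.prime_two).mp hdvd
    rw [hn2] at hodd
    exact (by decide : ¬ Odd 2) hodd
  have hr₂k : r₂ = k * r₁ := by rw [hk]; field_simp
  have hs₂k : s₂ = k * s₁ := by
    rw [hk]
    field_simp
    linear_combination h
  have hM : (1/2 : ℂ) • (Mmat n r₁ s₁ + Mmat n r₂ s₂)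
      = (1/4 : ℂ) • (Amat n r₁ s₁ + (Amat n r₁ s₁)ᴴ
          + (Amat n (k * r₁) (k * s₁) + (Amat n (k * r₁) (k * s₁))ᴴ)) := by
    rw [Mmat, Mmat, hr₂k, hs₂k, ← smul_add, smul_smul]
    norm_num
  rw [hM]
  haveI : Invertible (Pm n r₁ s₁) :=
    invertibleOfRightInverse _ ((n : ℂ)⁻¹ • (Pm n r₁ s₁)ᴴ)
      (by rw [Matrix.mul_smul, Pm_mul_conjTranspose n r₁ s₁ hs₁, smul_smul,
        inv_mul_cancel₀ hnC, one_smul])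
  have hsim : (1/4 : ℂ) • (Amat n r₁ s₁ + (Amat n r₁ s₁)ᴴ
          + (Amat n (k * r₁) (k * s₁) + (Amat n (k * r₁) (k * s₁))ᴴ))
      = Pm n r₁ s₁ * Matrix.diagonal (lamv n r₁ s₁ k) * ⅟(Pm n r₁ s₁) := by
    rw [← key_mul n r₁ s₁ k hr₁ hs₁ h2, mul_assoc, mul_invOf_self, mul_one]
  rw [hsim]
  let u : (Matrix (ZMod n) (ZMod n) ℂ)ˣ :=
    ⟨Pm n r₁ s₁, ⅟(Pm n r₁ s₁), mul_invOf_self _, invOf_mul_self _⟩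
  have hu : Pm n r₁ s₁ * Matrix.diagonal (lamv n r₁ s₁ k) * ⅟(Pm n r₁ s₁)
      = (u : Matrix (ZMod n) (ZMod n) ℂ) * Matrix.diagonal (lamv n r₁ s₁ k)
        * ((u⁻¹ : (Matrix (ZMod n) (ZMod n) ℂ)ˣ) : Matrix (ZMod n) (ZMod n) ℂ) := rfl
  rw [hu, spectrum.units_conjugate, spectrum_diagonal]
  have hfun : lamv n r₁ s₁ k = fun d : ZMod n =>
      ((1 / 2 * (Real.cos (2 * Real.pi * d.val / n) +
        Real.cos (2 * Real.pi *
          ((-(k * (k - 1) * (2 : ZMod n)⁻¹ * r₁ * s₁) + k * d).val) / n)) : ℝ) : ℂ) := by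
    funext d
    have h1 := wfn_add_neg n d
    have h2' := wfn_add_neg n (-(k * (k - 1) * (2 : ZMod n)⁻¹ * r₁ * s₁) + k * d)
    have hx : k * (k - 1) * (2 : ZMod n)⁻¹ * r₁ * s₁ - k * d
        = -(-(k * (k - 1) * (2 : ZMod n)⁻¹ * r₁ * s₁) + k * d) := by ring
    rw [lamv, hx]
    calc (1/4 : ℂ) * (wfn n d + wfn n (-d)
          + wfn n (-(k * (k - 1) * (2 : ZMod n)⁻¹ * r₁ * s₁) + k * d)
          + wfn n (-(-(k * (k - 1) * (2 : ZMod n)⁻¹ * r₁ * s₁) + k * d)))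
        = (1/4 : ℂ) * ((wfn n d + wfn n (-d))
          + (wfn n (-(k * (k - 1) * (2 : ZMod n)⁻¹ * r₁ * s₁) + k * d)
            + wfn n (-(-(k * (k - 1) * (2 : ZMod n)⁻¹ * r₁ * s₁) + k * d)))) := by ring
      _ = _ := by rw [h1, h2']; push_cast; ring
  rw [hfun]
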